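/- If A is a Hermitian n×n matrix that is conditionally positive definite, then A has at most one negative eigenvalue (counting multiplicity). -/

import Mathlib

open ComplexOrder
open Matrix

theorem stmt9 (n : ℕ) (A : Matrix (Fin n) (Fin n) ℂ) (hA : A.IsHermitian)
    (hcpd : ∀ v : Fin n → ℂ, (∑ i, v i) = 0 →
        0 ≤ ∑ i, ∑ j, (starRingEnd ℂ) (v i) * A i j * v j) :
    (Finset.univ.filter (fun i => hA.eigenvalues i < 0)).card ≤ 1 := by
  rw [Finset.card_le_one]
  intro i hi j hj
  simp only [Finset.mem_filter, Finset.mem_univ, true_and] at hi hj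
  by_contra hij
  set u : Fin n → ℂ := ⇑(hA.eigenvectorBasis i) with hu
  set w : Fin n → ℂ := ⇑(hA.eigenvectorBasis j) with hw
  have hon := hA.eigenvectorBasis.orthonormal
  have hite := orthonormal_iff_ite.mp hon
  have huu : ∑ k, (starRingEnd ℂ) (u k) * u k = 1 := by
    have := hite i i
    simp only [PiLp.inner_apply, RCLike.inner_apply] at this
    simpa [hu, hw, mul_comm] using this
  have hww : ∑ k, (starRingEnd ℂ) (w k) * w k = 1 := by
    have := hite j j
    simp only [PiLp.inner_apply, RCLike.inner_apply] at this
    simpa [hu, hw, mul_comm] using this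
  have huw : ∑ k, (starRingEnd ℂ) (u k) * w k = 0 := by
    have := hite i j
    simp only [PiLp.inner_apply, RCLike.inner_apply] at this
    simpa [hu, hw, mul_comm, hij] using this
  have hwu : ∑ k, (starRingEnd ℂ) (w k) * u k = 0 := by
    have := hite j i
    simp only [PiLp.inner_apply, RCLike.inner_apply] at this
    simpa [hu, hw, mul_comm, Ne.symm hij] using this
  have hAu : ∀ k, (A *ᵥ u) k = (hA.eigenvalues i : ℂ) * u k := by
    intro k
    rw [hA.mulVec_eigenvectorBasis i]
    simp [hu, Complex.real_smul]
  have hAw : ∀ k, (A *ᵥ w) k = (hA.eigenvalues j : ℂ) * w k := by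
    intro k
    rw [hA.mulVec_eigenvectorBasis j]
    simp [hw, Complex.real_smul]
  -- the quadratic form identity
  have hquad : ∀ v : Fin n → ℂ,
      ∑ k, ∑ l, (starRingEnd ℂ) (v k) * A k l * v l
        = ∑ k, (starRingEnd ℂ) (v k) * (A *ᵥ v) k := by
    intro v
    refine Finset.sum_congr rfl fun k _ => ?_
    simp [Matrix.mulVec, dotProduct, Finset.mul_sum, mul_assoc]
  -- choose coefficients
  obtain ⟨a, b, hb0, hsum⟩ : ∃ a b : ℂ, (a ≠ 0 ∨ b ≠ 0) ∧
      a * (∑ k, u k) + b * (∑ k, w k) = 0 := by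
    by_cases hsu : (∑ k, u k) = 0
    · exact ⟨1, 0, Or.inl one_ne_zero, by simp [hsu]⟩
    · exact ⟨∑ k, w k, -(∑ k, u k), Or.inr (by simpa using hsu), by ring⟩
  set v : Fin n → ℂ := fun k => a * u k + b * w k with hv
  have hvsum : (∑ k, v k) = 0 := by
    simpa [hv, Finset.sum_add_distrib, Finset.mul_sum] using hsum
  have hAv : ∀ k, (A *ᵥ v) k = a * ((hA.eigenvalues i : ℂ) * u k)
      + b * ((hA.eigenvalues j : ℂ) * w k) := by
    intro k
    have hvs : v = a • u + b • w := by ext l; simp [hv]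
    rw [hvs, Matrix.mulVec_add]
    simp only [Pi.add_apply, Matrix.mulVec_smul, Pi.smul_apply, smul_eq_mul, hAu, hAw]
  have key : ∑ k, ∑ l, (starRingEnd ℂ) (v k) * A k l * v l
      = (starRingEnd ℂ) a * a * (hA.eigenvalues i : ℂ)
        + (starRingEnd ℂ) b * b * (hA.eigenvalues j : ℂ) := by
    rw [hquad]
    have : ∀ k, (starRingEnd ℂ) (v k) * (A *ᵥ v) k
        = ((starRingEnd ℂ) a * a * (hA.eigenvalues i : ℂ)) * ((starRingEnd ℂ) (u k) * u k)
          + ((starRingEnd ℂ) a * b * (hA.eigenvalues j : ℂ)) * ((starRingEnd ℂ) (u k) * w k)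
          + ((starRingEnd ℂ) b * a * (hA.eigenvalues i : ℂ)) * ((starRingEnd ℂ) (w k) * u k)
          + ((starRingEnd ℂ) b * b * (hA.eigenvalues j : ℂ)) * ((starRingEnd ℂ) (w k) * w k) := by
      intro k
      rw [hAv k]
      simp only [hv, map_add, _root_.map_mul]
      ring
    rw [Finset.sum_congr rfl fun k _ => this k]
    simp only [Finset.sum_add_distrib, ← Finset.mul_sum, huu, hww, huw, hwu]
    ring
  have hle := hcpd v hvsum
  rw [key] at hle
  -- derive contradiction : the RHS has negative real part
  have ha2 : (0:ℝ) ≤ Complex.normSq a := Complex.normSq_nonneg a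
  have hb2 : (0:ℝ) ≤ Complex.normSq b := Complex.normSq_nonneg b
  have hre : ((starRingEnd ℂ) a * a * (hA.eigenvalues i : ℂ)
      + (starRingEnd ℂ) b * b * (hA.eigenvalues j : ℂ)).re
      = Complex.normSq a * hA.eigenvalues i + Complex.normSq b * hA.eigenvalues j := by
    simp [Complex.normSq_eq_conj_mul_self, Complex.add_re, Complex.mul_re, Complex.normSq_apply]
  have h0le : (0:ℝ) ≤ Complex.normSq a * hA.eigenvalues i + Complex.normSq b * hA.eigenvalues j := by
    have := (Complex.le_def.mp hle)
    simpa [hre] using this.1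
  have hlt : Complex.normSq a * hA.eigenvalues i + Complex.normSq b * hA.eigenvalues j < 0 := by
    rcases hb0 with ha | hb
    · have : 0 < Complex.normSq a := Complex.normSq_pos.mpr ha
      nlinarith [mul_nonpos_of_nonneg_of_nonpos hb2 hj.le]
    · have : 0 < Complex.normSq b := Complex.normSq_pos.mpr hb
      nlinarith [mul_nonpos_of_nonneg_of_nonpos ha2 hi.le]
  linarith
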